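/- Let R be a semiring, M an R-module, N a saturated submodule of M, π : M → M/N the natural projection, and K a saturated submodule of M/N. Then M/π⁻¹(K) is isomorphic to (M/N)/K as R-modules. -/
import Mathlib


/-- A submodule `N` of a module `M` over a semiring is *saturated* if
`x + y ∈ N` and `y ∈ N` imply `x ∈ N`. -/
def SaturatedSub {R M : Type*} [Semiring R] [AddCommMonoid M] [Module R M]
    (N : Submodule R M) : Prop :=
  ∀ x y : M, x + y ∈ N → y ∈ N → x ∈ N

variable {R M : Type*} [Semiring R] [AddCommMonoid M] [Module R M]

/-- The congruence on `M` defined by a submodule `N`: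
`x ~ y` iff `x + n = y + n'` for some `n, n' ∈ N`. -/
def quotCon (N : Submodule R M) : AddCon M where
  r x y := ∃ n ∈ N, ∃ n' ∈ N, x + n = y + n'
  iseqv := by
    constructor
    · intro x; exact ⟨0, N.zero_mem, 0, N.zero_mem, rfl⟩
    · rintro x y ⟨n, hn, n', hn', h⟩; exact ⟨n', hn', n, hn, h.symm⟩
    · rintro x y z ⟨n, hn, n', hn', h1⟩ ⟨m, hm, m', hm', h2⟩
      refine ⟨n + m, N.add_mem hn hm, m' + n', N.add_mem hm' hn', ?_⟩
      calc x + (n + m) = x + n + m := (add_assoc _ _ _).symm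
        _ = y + n' + m := by rw [h1]
        _ = y + m + n' := by rw [add_right_comm]
        _ = z + m' + n' := by rw [h2]
        _ = z + (m' + n') := add_assoc _ _ _
  add' := by
    rintro w x y z ⟨n, hn, n', hn', h1⟩ ⟨m, hm, m', hm', h2⟩
    refine ⟨n + m, N.add_mem hn hm, n' + m', N.add_mem hn' hm', ?_⟩
    calc w + y + (n + m) = (w + n) + (y + m) := by rw [add_add_add_comm]
      _ = (x + n') + (z + m') := by rw [h1, h2]
      _ = x + z + (n' + m') := by rw [add_add_add_comm]

instance (N : Submodule R M) : SMul R (quotCon N).Quotient where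
  smul r := Quotient.map' (fun m => r • m) (by
    rintro a b ⟨n, hn, n', hn', h⟩
    exact ⟨r • n, N.smul_mem r hn, r • n', N.smul_mem r hn', by
      rw [← smul_add, h, smul_add]⟩)

instance (N : Submodule R M) : Module R (quotCon N).Quotient where
  one_smul x := Quotient.inductionOn' x fun m => congrArg Quotient.mk'' (one_smul R m)
  mul_smul r s x := Quotient.inductionOn' x fun m => congrArg Quotient.mk'' (mul_smul r s m)
  smul_zero r := congrArg Quotient.mk'' (smul_zero (a := r) : r • (0 : M) = 0)
  smul_add r x y := Quotient.inductionOn₂' x y fun m n => congrArg Quotient.mk'' (smul_add r m n)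
  add_smul r s x := Quotient.inductionOn' x fun m => congrArg Quotient.mk'' (add_smul r s m)
  zero_smul x := Quotient.inductionOn' x fun m => congrArg Quotient.mk'' (zero_smul R m)

/-- The canonical projection `M → M/N` as a linear map. -/
def mkLinear (N : Submodule R M) : M →ₗ[R] (quotCon N).Quotient where
  toFun := Quotient.mk''
  map_add' _ _ := rfl
  map_smul' _ _ := by exact rfl

/-- Third isomorphism theorem for modules over a semiring: if `N` is a saturated
submodule of `M`, `π : M → M/N` the projection and `K` a saturated submodule of `M/N`,
then `M/π⁻¹(K) ≅ (M/N)/K` as `R`-modules. -/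
theorem stmt4 {R M : Type*} [Semiring R] [AddCommMonoid M] [Module R M]
    (N : Submodule R M) (hN : SaturatedSub N)
    (K : Submodule R (quotCon N).Quotient) (hK : SaturatedSub K) :
    Nonempty ((quotCon (K.comap (mkLinear N))).Quotient ≃ₗ[R] (quotCon K).Quotient) := by
  -- elements of N map to elements of K (since π n = 0 ∈ K)
  have hNzero : ∀ n : M, n ∈ N → (Quotient.mk'' n : (quotCon N).Quotient) = Quotient.mk'' 0 := by
    intro n hn
    exact Quotient.sound' ⟨0, N.zero_mem, n, hn, by simp⟩
  have hresp : ∀ x y : M, (quotCon (K.comap (mkLinear N))) x y →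
      (quotCon K) (Quotient.mk'' x) (Quotient.mk'' y) := by
    rintro x y ⟨n, hn, n', hn', h⟩
    exact ⟨Quotient.mk'' n, hn, Quotient.mk'' n', hn', by
      show Quotient.mk'' (x + n) = Quotient.mk'' (y + n'); rw [h]⟩
  let f : (quotCon (K.comap (mkLinear N))).Quotient →ₗ[R] (quotCon K).Quotient :=
    { toFun := Quotient.map' (fun m => (Quotient.mk'' m : (quotCon N).Quotient)) hresp
      map_add' := fun a b => Quotient.inductionOn₂' a b fun _ _ => rfl
      map_smul' := fun r a => Quotient.inductionOn' a fun _ => rfl }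
  refine ⟨LinearEquiv.ofBijective f ⟨?_, ?_⟩⟩
  · intro a b
    refine Quotient.inductionOn₂' a b fun x y h => ?_
    obtain ⟨k, hk, k', hk', h⟩ := Quotient.eq''.mp h
    obtain ⟨u, rfl⟩ := Quotient.exists_rep k
    obtain ⟨v, rfl⟩ := Quotient.exists_rep k'
    have h2 : (Quotient.mk'' (x + u) : (quotCon N).Quotient) = Quotient.mk'' (y + v) := h
    obtain ⟨n, hn, n', hn', h3⟩ := Quotient.eq''.mp h2
    refine Quotient.sound' ⟨u + n, ?_, v + n', ?_, by
      rw [← add_assoc, ← add_assoc]; exact h3⟩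
    · show Quotient.mk'' (u + n) ∈ K
      have : (Quotient.mk'' (u + n) : (quotCon N).Quotient) = Quotient.mk'' u :=
        Quotient.sound' ⟨0, N.zero_mem, n, hn, by simp⟩
      rw [this]; exact hk
    · show Quotient.mk'' (v + n') ∈ K
      have : (Quotient.mk'' (v + n') : (quotCon N).Quotient) = Quotient.mk'' v :=
        Quotient.sound' ⟨0, N.zero_mem, n', hn', by simp⟩
      rw [this]; exact hk'
  · intro q
    refine Quotient.inductionOn' q fun a => ?_
    refine Quotient.inductionOn' a fun m => ?_
    exact ⟨Quotient.mk'' m, rfl⟩
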